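/- If A ∈ ℝ^{n×n} is a symmetric circulant matrix, then Ȟ_c·A·Ȟ_s + Ȟ_s·A·Ȟ_c = 0 and Ȟ_c·A·Ȟ_s − Ȟ_s·A·Ȟ_c = 0 (equivalently, Ȟ_c·A·Ȟ_s = Ȟ_s·A·Ȟ_c = 0). -/

import Mathlib

open Matrix Real

/-- The node-centered cosine matrix `(Ȟ_c)_{j,k} = n^{−1/2}·cos(2jkπ/n)`. -/
noncomputable def Hc (n : ℕ) : Matrix (Fin n) (Fin n) ℝ :=
  fun j k => Real.cos (2 * (j.val : ℝ) * (k.val : ℝ) * Real.pi / n) / Real.sqrt n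

/-- The node-centered sine matrix `(Ȟ_s)_{j,k} = n^{−1/2}·sin(2jkπ/n)`. -/
noncomputable def Hs (n : ℕ) : Matrix (Fin n) (Fin n) ℝ :=
  fun j k => Real.sin (2 * (j.val : ℝ) * (k.val : ℝ) * Real.pi / n) / Real.sqrt n

lemma cos_neg_arg (n : ℕ) [NeZero n] (j l : Fin n) :
    Real.cos (2 * (j.val : ℝ) * ((-l : Fin n).val : ℝ) * Real.pi / n)
      = Real.cos (2 * (j.val : ℝ) * (l.val : ℝ) * Real.pi / n) := by
  rcases eq_or_ne l 0 with rfl | h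
  · simp
  · have hl0 : 0 < l.val := Nat.pos_of_ne_zero (fun hv => h (Fin.ext (by simp [hv])))
    have hln : l.val < n := l.isLt
    have hv : ((-l).val : ℝ) = (n : ℝ) - l.val := by
      have h1 : (-l).val = n - l.val := by
        rw [Fin.coe_neg, Nat.mod_eq_of_lt (by omega)]
      rw [h1, Nat.cast_sub (by omega)]
    have hn : (n : ℝ) ≠ 0 := Nat.cast_ne_zero.mpr (NeZero.ne n)
    rw [hv]
    have harg : 2 * (j.val : ℝ) * ((n : ℝ) - l.val) * Real.pi / n
        = (j.val : ℕ) * (2 * Real.pi) - 2 * (j.val : ℝ) * l.val * Real.pi / n := by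
      field_simp
    rw [harg, Real.cos_nat_mul_two_pi_sub]

lemma sin_neg_arg (n : ℕ) [NeZero n] (j l : Fin n) :
    Real.sin (2 * (j.val : ℝ) * ((-l : Fin n).val : ℝ) * Real.pi / n)
      = -Real.sin (2 * (j.val : ℝ) * (l.val : ℝ) * Real.pi / n) := by
  rcases eq_or_ne l 0 with rfl | h
  · simp
  · have hl0 : 0 < l.val := Nat.pos_of_ne_zero (fun hv => h (Fin.ext (by simp [hv])))
    have hln : l.val < n := l.isLt
    have hv : ((-l).val : ℝ) = (n : ℝ) - l.val := by
      have h1 : (-l).val = n - l.val := by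
        rw [Fin.coe_neg, Nat.mod_eq_of_lt (by omega)]
      rw [h1, Nat.cast_sub (by omega)]
    have hn : (n : ℝ) ≠ 0 := Nat.cast_ne_zero.mpr (NeZero.ne n)
    rw [hv]
    have harg : 2 * (j.val : ℝ) * ((n : ℝ) - l.val) * Real.pi / n
        = (j.val : ℕ) * (2 * Real.pi) - 2 * (j.val : ℝ) * l.val * Real.pi / n := by
      field_simp
    rw [harg, Real.sin_nat_mul_two_pi_sub]

lemma cos_neg_arg' (n : ℕ) [NeZero n] (j l : Fin n) :
    Real.cos (2 * ((-l : Fin n).val : ℝ) * (j.val : ℝ) * Real.pi / n)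
      = Real.cos (2 * (l.val : ℝ) * (j.val : ℝ) * Real.pi / n) := by
  rw [show (2 * (((-l):Fin n).val:ℝ) * (j.val:ℝ) * Real.pi / n)
      = (2 * (j.val:ℝ) * (((-l):Fin n).val:ℝ) * Real.pi / n) from by ring,
    cos_neg_arg n j l]
  ring_nf

lemma sin_neg_arg' (n : ℕ) [NeZero n] (j l : Fin n) :
    Real.sin (2 * ((-l : Fin n).val : ℝ) * (j.val : ℝ) * Real.pi / n)
      = -Real.sin (2 * (l.val : ℝ) * (j.val : ℝ) * Real.pi / n) := by
  rw [show (2 * (((-l):Fin n).val:ℝ) * (j.val:ℝ) * Real.pi / n)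
      = (2 * (j.val:ℝ) * (((-l):Fin n).val:ℝ) * Real.pi / n) from by ring,
    sin_neg_arg n j l]
  ring_nf

/-- For a symmetric circulant matrix `A` (with `A_{j,k} = a_{(j−k) mod n}` and
`a_{n−i} = a_i`), we have `Ȟ_c·A·Ȟ_s + Ȟ_s·A·Ȟ_c = 0` and
`Ȟ_c·A·Ȟ_s − Ȟ_s·A·Ȟ_c = 0`. -/
theorem symm_circulant_mixed_zero (n : ℕ) [NeZero n] (a : Fin n → ℝ)
    (A : Matrix (Fin n) (Fin n) ℝ)
    (hA : ∀ j k : Fin n, A j k = a (j - k))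
    (ha : ∀ i : Fin n, a (-i) = a i) :
    Hc n * A * Hs n + Hs n * A * Hc n = 0 ∧
    Hc n * A * Hs n - Hs n * A * Hc n = 0 := by
  have hAneg : ∀ l m : Fin n, A (-l) (-m) = A l m := by
    intro l m
    rw [hA, hA]
    have : (-l) - (-m) = -(l - m) := by abel
    rw [this, ha]
  have h1 : Hc n * A * Hs n = 0 := by
    ext j k
    rw [Matrix.mul_apply]
    simp only [Matrix.mul_apply, Finset.sum_mul, Matrix.zero_apply]
    have key : (∑ m : Fin n, ∑ l : Fin n, Hc n j l * A l m * Hs n m k)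
        = -(∑ m : Fin n, ∑ l : Fin n, Hc n j l * A l m * Hs n m k) := by
      nth_rewrite 1 [← Equiv.sum_comp (Equiv.neg (Fin n))]
      rw [← Finset.sum_neg_distrib]
      refine Finset.sum_congr rfl fun m _ => ?_
      rw [← Equiv.sum_comp (Equiv.neg (Fin n)), ← Finset.sum_neg_distrib]
      refine Finset.sum_congr rfl fun l _ => ?_
      simp only [Equiv.neg_apply]
      rw [hAneg]
      unfold Hc Hs
      rw [cos_neg_arg, sin_neg_arg' n k m]
      ring
    linarith
  have h2 : Hs n * A * Hc n = 0 := by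
    ext j k
    rw [Matrix.mul_apply]
    simp only [Matrix.mul_apply, Finset.sum_mul, Matrix.zero_apply]
    have key : (∑ m : Fin n, ∑ l : Fin n, Hs n j l * A l m * Hc n m k)
        = -(∑ m : Fin n, ∑ l : Fin n, Hs n j l * A l m * Hc n m k) := by
      nth_rewrite 1 [← Equiv.sum_comp (Equiv.neg (Fin n))]
      rw [← Finset.sum_neg_distrib]
      refine Finset.sum_congr rfl fun m _ => ?_
      rw [← Equiv.sum_comp (Equiv.neg (Fin n)), ← Finset.sum_neg_distrib]
      refine Finset.sum_congr rfl fun l _ => ?_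
      simp only [Equiv.neg_apply]
      rw [hAneg]
      unfold Hc Hs
      rw [sin_neg_arg, cos_neg_arg' n k m]
      ring
    linarith
  rw [h1, h2]
  simp
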